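/- Let θ ∈ ℝ and let B_θ be the linear endomorphism of the space of finitely supported functions ℕ² → ℂ sending the basis vector e_{(k₁,k₂)} to Σ_{(ℓ₁,ℓ₂)} c_θ((k₁,k₂),(ℓ₁,ℓ₂)) · e_{(ℓ₁,ℓ₂)}. Let a₁† and a₂† be the creation operators, i.e. the linear maps with a₁†(e_{(k₁,k₂)}) = √(k₁+1) · e_{(k₁+1,k₂)} and a₂†(e_{(k₁,k₂)}) = √(k₂+1) · e_{(k₁,k₂+1)}. Then B_θ ∘ a₁† = cos θ · (a₁† ∘ B_θ) + i·sin θ · (a₂† ∘ B_θ) and B_θ ∘ a₂† = i·sin θ · (a₁† ∘ B_θ) + cos θ · (a₂† ∘ B_θ). (This is the commutation rule of the creation operators through a beam splitter.) -/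

import Mathlib

open Complex Real Finset Polynomial

noncomputable def bsCoeff (θ : ℝ) (k ℓ : ℕ × ℕ) : ℂ :=
  if ℓ.1 + ℓ.2 = k.1 + k.2 then
    (Real.sqrt ((ℓ.1.factorial * ℓ.2.factorial : ℕ) /
        ((k.1.factorial * k.2.factorial : ℕ) : ℝ)) : ℂ) *
      ∑ pq ∈ (Finset.HasAntidiagonal.antidiagonal ℓ.1).filter (fun pq => pq.1 ≤ k.1 ∧ pq.2 ≤ k.2),
        (k.1.choose pq.1 : ℂ) * (k.2.choose pq.2 : ℂ) *
          (Real.cos θ : ℂ) ^ (k.2 + pq.1 - pq.2) *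
          (Complex.I * Real.sin θ) ^ (k.1 - pq.1 + pq.2)
  else 0

lemma coeff_linear_pow (u v : ℂ) (n p : ℕ) :
    ((Polynomial.C v + Polynomial.C u * Polynomial.X) ^ n).coeff p
      = (n.choose p : ℂ) * u ^ p * v ^ (n - p) := by
  rw [add_comm, (Commute.all _ _).add_pow, ← Polynomial.lcoeff_apply, map_sum]
  simp only [lcoeff_apply, mul_pow, ← Polynomial.C_pow, ← Polynomial.C_eq_natCast,
    Polynomial.X_pow_mul_assoc, ← Polynomial.C_mul, Polynomial.coeff_C_mul,
    Polynomial.coeff_X_pow]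
  rw [Finset.sum_eq_single p]
  · simp [mul_comm, mul_assoc, mul_left_comm]
  · intro b _ h
    simp [Ne.symm h]
  · intro h
    simp only [Finset.mem_range, not_lt] at h
    simp [Nat.choose_eq_zero_of_lt h]

noncomputable def bsPoly (θ : ℝ) (k₁ k₂ : ℕ) : Polynomial ℂ :=
  (Polynomial.C (Complex.I * Real.sin θ) + Polynomial.C ((Real.cos θ : ℂ)) * Polynomial.X) ^ k₁ *
  (Polynomial.C ((Real.cos θ : ℂ)) + Polynomial.C (Complex.I * Real.sin θ) * Polynomial.X) ^ k₂

lemma sum_eq_coeff (θ : ℝ) (k₁ k₂ m : ℕ) :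
    ∑ pq ∈ (Finset.HasAntidiagonal.antidiagonal m).filter (fun pq => pq.1 ≤ k₁ ∧ pq.2 ≤ k₂),
        (k₁.choose pq.1 : ℂ) * (k₂.choose pq.2 : ℂ) *
          (Real.cos θ : ℂ) ^ (k₂ + pq.1 - pq.2) *
          (Complex.I * Real.sin θ) ^ (k₁ - pq.1 + pq.2)
      = (bsPoly θ k₁ k₂).coeff m := by
  rw [bsPoly, Polynomial.coeff_mul, Finset.sum_filter]
  refine Finset.sum_congr rfl ?_
  rintro ⟨p, q⟩ hmem
  simp only [Finset.HasAntidiagonal.mem_antidiagonal] at hmem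
  rw [coeff_linear_pow, coeff_linear_pow]
  by_cases hp : p ≤ k₁
  · by_cases hq : q ≤ k₂
    · rw [if_pos ⟨hp, hq⟩]
      have e1 : k₂ + p - q = p + (k₂ - q) := by omega
      have e2 : k₁ - p + q = (k₁ - p) + q := rfl
      rw [e1, e2, pow_add, pow_add]
      ring
    · rw [if_neg (by tauto), Nat.choose_eq_zero_of_lt (show k₂ < q by omega)]
      simp
  · rw [if_neg (by tauto), Nat.choose_eq_zero_of_lt (show k₁ < p by omega)]
    simp

lemma coeff_linear_mul (u v : ℂ) (Q : Polynomial ℂ) (n : ℕ) :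
    ((Polynomial.C v + Polynomial.C u * Polynomial.X) * Q).coeff (n + 1)
      = u * Q.coeff n + v * Q.coeff (n + 1) := by
  rw [add_mul, Polynomial.coeff_add, Polynomial.coeff_C_mul, mul_assoc,
    Polynomial.coeff_C_mul, Polynomial.coeff_X_mul]
  ring

lemma coeff_linear_mul_zero (u v : ℂ) (Q : Polynomial ℂ) :
    ((Polynomial.C v + Polynomial.C u * Polynomial.X) * Q).coeff 0 = v * Q.coeff 0 := by
  rw [add_mul, Polynomial.coeff_add, Polynomial.coeff_C_mul, mul_assoc,
    Polynomial.mul_coeff_zero]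
  simp

lemma bsPoly_succ_left (θ : ℝ) (k₁ k₂ : ℕ) :
    bsPoly θ (k₁ + 1) k₂ =
      (Polynomial.C (Complex.I * Real.sin θ) + Polynomial.C ((Real.cos θ : ℂ)) * Polynomial.X) *
        bsPoly θ k₁ k₂ := by
  rw [bsPoly, bsPoly, pow_succ]; ring

lemma bsPoly_succ_right (θ : ℝ) (k₁ k₂ : ℕ) :
    bsPoly θ k₁ (k₂ + 1) =
      (Polynomial.C ((Real.cos θ : ℂ)) + Polynomial.C (Complex.I * Real.sin θ) * Polynomial.X) *
        bsPoly θ k₁ k₂ := by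
  rw [bsPoly, bsPoly, pow_succ]; ring

lemma coeff_bsPoly_eq_zero (θ : ℝ) {k₁ k₂ m : ℕ} (h : k₁ + k₂ < m) :
    (bsPoly θ k₁ k₂).coeff m = 0 := by
  rw [← sum_eq_coeff]
  refine Finset.sum_eq_zero ?_
  rintro ⟨p, q⟩ hpq
  simp only [Finset.mem_filter, Finset.HasAntidiagonal.mem_antidiagonal] at hpq
  omega

noncomputable def Fsq (n : ℕ) : ℝ := Real.sqrt n.factorial

lemma Fsq_pos (n : ℕ) : 0 < Fsq n :=
  Real.sqrt_pos.2 (by exact_mod_cast n.factorial_pos)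

lemma Fsq_succ (n : ℕ) : Fsq (n + 1) = Real.sqrt (n + 1) * Fsq n := by
  rw [Fsq, Fsq, ← Real.sqrt_mul (by positivity)]
  congr 1
  rw [Nat.factorial_succ]
  push_cast
  ring

lemma sqrt_quot (a b c d : ℕ) :
    Real.sqrt (((a.factorial * b.factorial : ℕ) : ℝ) / ((c.factorial * d.factorial : ℕ) : ℝ))
      = Fsq a * Fsq b / (Fsq c * Fsq d) := by
  rw [Real.sqrt_div' _ (by positivity), Fsq, Fsq, Fsq, Fsq,
    ← Real.sqrt_mul (by positivity), ← Real.sqrt_mul (by positivity)]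
  push_cast
  ring_nf


lemma bsCoeff_eq (θ : ℝ) (k₁ k₂ m₁ m₂ : ℕ) :
    bsCoeff θ (k₁, k₂) (m₁, m₂) =
      if m₁ + m₂ = k₁ + k₂ then
        ((Fsq m₁ * Fsq m₂ / (Fsq k₁ * Fsq k₂) : ℝ) : ℂ) * (bsPoly θ k₁ k₂).coeff m₁
      else 0 := by
  rw [bsCoeff]
  split_ifs with h
  · rw [sqrt_quot, sum_eq_coeff]
  · rfl

lemma Fsq_ne (n : ℕ) : (Fsq n : ℂ) ≠ 0 := by
  exact_mod_cast (Fsq_pos n).ne'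

lemma sqrt_succ_ne (n : ℕ) : ((Real.sqrt (n + 1) : ℝ) : ℂ) ≠ 0 := by
  have : (0:ℝ) < Real.sqrt (n + 1) := Real.sqrt_pos.2 (by positivity)
  exact_mod_cast this.ne'

lemma key1 (θ : ℝ) (k₁ k₂ m₁ m₂ : ℕ) :
    (Real.sqrt (k₁ + 1) : ℂ) * bsCoeff θ (k₁ + 1, k₂) (m₁, m₂)
      = (Real.cos θ : ℂ) * ((Real.sqrt m₁ : ℝ) : ℂ) * bsCoeff θ (k₁, k₂) (m₁ - 1, m₂)
        + (Complex.I * Real.sin θ) * ((Real.sqrt m₂ : ℝ) : ℂ) *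
            bsCoeff θ (k₁, k₂) (m₁, m₂ - 1) := by
  rcases m₁ with _ | n₁
  · rcases m₂ with _ | n₂
    · rw [bsCoeff_eq, if_neg (by omega)]
      simp
    · simp only [Nat.zero_sub, Nat.add_sub_cancel, bsCoeff_eq, Nat.cast_zero, Real.sqrt_zero,
        Complex.ofReal_zero, mul_zero, zero_mul, zero_add]
      by_cases h : n₂ + 1 = k₁ + 1 + k₂
      · rw [if_pos h, if_pos (show n₂ = k₁ + k₂ by omega), bsPoly_succ_left,
          coeff_linear_mul_zero]
        have hn : n₂ = k₁ + k₂ := by omega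
        subst hn
        rw [Fsq_succ (k₁ + k₂), Fsq_succ k₁]
        push_cast
        field_simp [Fsq_ne, sqrt_succ_ne]
      · rw [if_neg (by omega), if_neg (by omega)]
        simp
  · rcases m₂ with _ | n₂
    · simp only [Nat.add_sub_cancel, Nat.zero_sub, bsCoeff_eq, Nat.cast_zero, Real.sqrt_zero,
        Complex.ofReal_zero, mul_zero, zero_mul, add_zero]
      by_cases h : n₁ + 1 + 0 = k₁ + 1 + k₂
      · rw [if_pos (by omega), if_pos (by omega), bsPoly_succ_left, coeff_linear_mul]
        have hz : (bsPoly θ k₁ k₂).coeff (n₁ + 1) = 0 :=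
          coeff_bsPoly_eq_zero θ (by omega)
        rw [hz]
        rw [Fsq_succ k₁, Fsq_succ n₁]
        push_cast
        field_simp [Fsq_ne, sqrt_succ_ne]
        ring
      · rw [if_neg (by omega), if_neg (by omega)]
        simp
    · simp only [Nat.add_sub_cancel, bsCoeff_eq]
      by_cases h : n₁ + 1 + (n₂ + 1) = k₁ + 1 + k₂
      · rw [if_pos (by omega), if_pos (by omega), if_pos (by omega), bsPoly_succ_left,
          coeff_linear_mul]
        rw [Fsq_succ k₁, Fsq_succ n₁, Fsq_succ n₂]
        push_cast
        field_simp [Fsq_ne, sqrt_succ_ne]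
      · rw [if_neg (by omega), if_neg (by omega), if_neg (by omega)]
        simp

lemma coeff_linear_mul_zero' (u v : ℂ) (Q : Polynomial ℂ) :
    ((Polynomial.C v + Polynomial.C u * Polynomial.X) * Q).coeff 0 = v * Q.coeff 0 :=
  coeff_linear_mul_zero u v Q

lemma key2 (θ : ℝ) (k₁ k₂ m₁ m₂ : ℕ) :
    (Real.sqrt (k₂ + 1) : ℂ) * bsCoeff θ (k₁, k₂ + 1) (m₁, m₂)
      = (Complex.I * Real.sin θ) * ((Real.sqrt m₁ : ℝ) : ℂ) * bsCoeff θ (k₁, k₂) (m₁ - 1, m₂)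
        + (Real.cos θ : ℂ) * ((Real.sqrt m₂ : ℝ) : ℂ) *
            bsCoeff θ (k₁, k₂) (m₁, m₂ - 1) := by
  rcases m₁ with _ | n₁
  · rcases m₂ with _ | n₂
    · rw [bsCoeff_eq, if_neg (by omega)]
      simp
    · simp only [Nat.zero_sub, Nat.add_sub_cancel, bsCoeff_eq, Nat.cast_zero, Real.sqrt_zero,
        Complex.ofReal_zero, mul_zero, zero_mul, zero_add]
      by_cases h : n₂ + 1 = k₁ + (k₂ + 1)
      · rw [if_pos h, if_pos (show n₂ = k₁ + k₂ by omega), bsPoly_succ_right,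
          coeff_linear_mul_zero]
        have hn : n₂ = k₁ + k₂ := by omega
        subst hn
        rw [Fsq_succ (k₁ + k₂), Fsq_succ k₂]
        push_cast
        field_simp [Fsq_ne, sqrt_succ_ne]
      · rw [if_neg (by omega), if_neg (by omega)]
        simp
  · rcases m₂ with _ | n₂
    · simp only [Nat.add_sub_cancel, Nat.zero_sub, bsCoeff_eq, Nat.cast_zero, Real.sqrt_zero,
        Complex.ofReal_zero, mul_zero, zero_mul, add_zero]
      by_cases h : n₁ + 1 + 0 = k₁ + (k₂ + 1)
      · rw [if_pos (by omega), if_pos (by omega), bsPoly_succ_right, coeff_linear_mul]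
        have hz : (bsPoly θ k₁ k₂).coeff (n₁ + 1) = 0 :=
          coeff_bsPoly_eq_zero θ (by omega)
        rw [hz]
        rw [Fsq_succ k₂, Fsq_succ n₁]
        push_cast
        field_simp [Fsq_ne, sqrt_succ_ne]
        ring
      · rw [if_neg (by omega), if_neg (by omega)]
        simp
    · simp only [Nat.add_sub_cancel, bsCoeff_eq]
      by_cases h : n₁ + 1 + (n₂ + 1) = k₁ + (k₂ + 1)
      · rw [if_pos (by omega), if_pos (by omega), if_pos (by omega), bsPoly_succ_right,
          coeff_linear_mul]
        rw [Fsq_succ k₂, Fsq_succ n₁, Fsq_succ n₂]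
        push_cast
        field_simp [Fsq_ne, sqrt_succ_ne]
      · rw [if_neg (by omega), if_neg (by omega), if_neg (by omega)]
        simp


theorem bs_creation_commutation (θ : ℝ)
    (B a₁ a₂ : ((ℕ × ℕ) →₀ ℂ) →ₗ[ℂ] ((ℕ × ℕ) →₀ ℂ))
    (hB : ∀ k ℓ : ℕ × ℕ, B (Finsupp.single k 1) ℓ = bsCoeff θ k ℓ)
    (hA1 : ∀ k : ℕ × ℕ,
      a₁ (Finsupp.single k 1) =
        (Real.sqrt (k.1 + 1) : ℂ) • Finsupp.single (k.1 + 1, k.2) 1)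
    (hA2 : ∀ k : ℕ × ℕ,
      a₂ (Finsupp.single k 1) =
        (Real.sqrt (k.2 + 1) : ℂ) • Finsupp.single (k.1, k.2 + 1) 1) :
    B ∘ₗ a₁ = (Real.cos θ : ℂ) • (a₁ ∘ₗ B) + (Complex.I * Real.sin θ) • (a₂ ∘ₗ B) ∧
    B ∘ₗ a₂ = (Complex.I * Real.sin θ) • (a₁ ∘ₗ B) + (Real.cos θ : ℂ) • (a₂ ∘ₗ B) := by
  -- general evaluation of a₁ and a₂ on arbitrary finsupps
  have ha1 : ∀ (f : (ℕ × ℕ) →₀ ℂ) (m : ℕ × ℕ),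
      a₁ f m = ((Real.sqrt m.1 : ℝ) : ℂ) * f (m.1 - 1, m.2) := by
    intro f
    induction f using Finsupp.induction_linear with
    | zero => intro m; simp
    | add f g hf hg =>
        intro m
        simp only [map_add, Finsupp.add_apply, hf, hg]
        ring
    | single c r =>
        intro m
        have : (Finsupp.single c r) = r • Finsupp.single c 1 := by
          rw [Finsupp.smul_single, smul_eq_mul, mul_one]
        rw [this, map_smul, hA1 c]
        rcases m with ⟨m₁, m₂⟩
        rcases m₁ with _ | n
        · simp [Finsupp.single_apply, Prod.ext_iff]
        · simp only [Finsupp.smul_apply, Finsupp.single_apply, smul_eq_mul, Nat.add_sub_cancel]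
          by_cases hc : c = (n, m₂)
          · subst hc
            simp [mul_comm]
          · rw [if_neg (by simpa [Prod.ext_iff] using fun h1 h2 => hc (Prod.ext (by omega) h2)),
              if_neg hc]
            simp
  have ha2 : ∀ (f : (ℕ × ℕ) →₀ ℂ) (m : ℕ × ℕ),
      a₂ f m = ((Real.sqrt m.2 : ℝ) : ℂ) * f (m.1, m.2 - 1) := by
    intro f
    induction f using Finsupp.induction_linear with
    | zero => intro m; simp
    | add f g hf hg =>
        intro m
        simp only [map_add, Finsupp.add_apply, hf, hg]
        ring
    | single c r =>
        intro m
        have : (Finsupp.single c r) = r • Finsupp.single c 1 := by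
          rw [Finsupp.smul_single, smul_eq_mul, mul_one]
        rw [this, map_smul, hA2 c]
        rcases m with ⟨m₁, m₂⟩
        rcases m₂ with _ | n
        · simp [Finsupp.single_apply, Prod.ext_iff]
        · simp only [Finsupp.smul_apply, Finsupp.single_apply, smul_eq_mul, Nat.add_sub_cancel]
          by_cases hc : c = (m₁, n)
          · subst hc
            simp [mul_comm]
          · rw [if_neg (by simpa [Prod.ext_iff] using fun h1 h2 => hc (Prod.ext h1 (by omega))),
              if_neg hc]
            simp
  have hext : ∀ (φ ψ : ((ℕ × ℕ) →₀ ℂ) →ₗ[ℂ] ((ℕ × ℕ) →₀ ℂ)),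
      (∀ k : ℕ × ℕ, φ (Finsupp.single k 1) = ψ (Finsupp.single k 1)) → φ = ψ := by
    intro φ ψ h
    apply Finsupp.lhom_ext
    intro k c
    have hs : (Finsupp.single k c) = c • Finsupp.single k 1 := by
      rw [Finsupp.smul_single, smul_eq_mul, mul_one]
    rw [hs, map_smul, map_smul, h]
  constructor
  · apply hext
    intro k
    apply Finsupp.ext
    intro m
    rw [LinearMap.comp_apply, hA1 k, map_smul, Finsupp.smul_apply, smul_eq_mul,
      hB (k.1 + 1, k.2) m]
    rw [LinearMap.add_apply, Finsupp.add_apply, LinearMap.smul_apply, LinearMap.smul_apply,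
      Finsupp.smul_apply, Finsupp.smul_apply, LinearMap.comp_apply, LinearMap.comp_apply,
      ha1 _ m, ha2 _ m, hB k (m.1 - 1, m.2), hB k (m.1, m.2 - 1), smul_eq_mul, smul_eq_mul]
    have := key1 θ k.1 k.2 m.1 m.2
    rw [show ((m.1, m.2) : ℕ × ℕ) = m from rfl] at this
    rw [this]
    ring
  · apply hext
    intro k
    apply Finsupp.ext
    intro m
    rw [LinearMap.comp_apply, hA2 k, map_smul, Finsupp.smul_apply, smul_eq_mul,
      hB (k.1, k.2 + 1) m]
    rw [LinearMap.add_apply, Finsupp.add_apply, LinearMap.smul_apply, LinearMap.smul_apply,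
      Finsupp.smul_apply, Finsupp.smul_apply, LinearMap.comp_apply, LinearMap.comp_apply,
      ha1 _ m, ha2 _ m, hB k (m.1 - 1, m.2), hB k (m.1, m.2 - 1), smul_eq_mul, smul_eq_mul]
    have := key2 θ k.1 k.2 m.1 m.2
    rw [show ((m.1, m.2) : ℕ × ℕ) = m from rfl] at this
    rw [this]
    ring
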